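/- arXiv:2110.11693 — 2 statements merged into one kernel-verified Lean document; each statement's English description precedes it below -/
import Mathlib

section
/- Consider the setting: $Y$ a Hilbert space, $S \in \mathcal{L}(L^2(\Omega), Y)$, $\alpha > 0$, $\gamma > 0$, $u_a, w_1, w_2 \in L^2(\Omega)$, and monotone C^1 penalty $\pi$ with bounded derivative. If $u_i \in L^2(\Omega)$ satisfy $S^*(Su_i - y_d) + \alpha(u_i - w_i) + \gamma\pi(u_i - u_a) = 0$ for $i = 1, 2$, then $\|u_2 - u_1\|_{L^2(\Omega)} \le \|w_2 - w_1\|_{L^2(\Omega)}$. -/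
open MeasureTheory

set_option maxHeartbeats 1000000 in
theorem regularized_solution_lipschitz {Ω : Type*} [MeasurableSpace Ω] (m : Measure Ω)
    {Y : Type*} [NormedAddCommGroup Y] [InnerProductSpace ℝ Y] [CompleteSpace Y]
    (S : Lp ℝ 2 m →L[ℝ] Y) (α γ : ℝ) (hα : 0 < α) (hγ : 0 < γ)
    (pi : ℝ → ℝ) (hmono : Monotone pi)
    (ua w₁ w₂ u₁ u₂ : Lp ℝ 2 m) (yd : Y)
    (ξ₁ ξ₂ : Lp ℝ 2 m)
    (hξ₁ : ∀ᵐ ω ∂m, ξ₁ ω = pi (u₁ ω - ua ω))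
    (hξ₂ : ∀ᵐ ω ∂m, ξ₂ ω = pi (u₂ ω - ua ω))
    (he₁ : S.adjoint (S u₁ - yd) + α • (u₁ - w₁) + γ • ξ₁ = 0)
    (he₂ : S.adjoint (S u₂ - yd) + α • (u₂ - w₂) + γ • ξ₂ = 0) :
    ‖u₂ - u₁‖ ≤ ‖w₂ - w₁‖ := by
  set d := u₂ - u₁ with hd
  set w := w₂ - w₁ with hw
  have hsub : S.adjoint (S d) + α • (d - w) + γ • (ξ₂ - ξ₁) = 0 := by
    have h : (S.adjoint (S u₂ - yd) + α • (u₂ - w₂) + γ • ξ₂)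
        - (S.adjoint (S u₁ - yd) + α • (u₁ - w₁) + γ • ξ₁) = 0 := by
      rw [he₁, he₂]; simp
    have hS : S d = S u₂ - S u₁ := by rw [hd, map_sub]
    have hadj : S.adjoint (S d) = S.adjoint (S u₂ - yd) - S.adjoint (S u₁ - yd) := by
      rw [← map_sub]
      congr 1
      rw [hS]; abel
    rw [← h, hadj, hd, hw]
    module
  have hP : (0:ℝ) ≤ inner ℝ (ξ₂ - ξ₁) d := by
    rw [L2.inner_def]
    apply integral_nonneg_of_ae
    filter_upwards [hξ₁, hξ₂, Lp.coeFn_sub ξ₂ ξ₁, Lp.coeFn_sub u₂ u₁] with ω h1 h2 h3 h4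
    simp only [RCLike.inner_apply, conj_trivial, Pi.sub_apply, Pi.zero_apply] at *
    rw [h3, h4, h1, h2]
    rcases le_total (u₁ ω - ua ω) (u₂ ω - ua ω) with h | h
    · have := hmono h
      nlinarith
    · have := hmono h
      nlinarith
  have hA : inner ℝ (S.adjoint (S d)) d = ‖S d‖^2 := by
    rw [ContinuousLinearMap.adjoint_inner_left, real_inner_self_eq_norm_sq]
  have h0 : (inner ℝ (S.adjoint (S d) + α • (d - w) + γ • (ξ₂ - ξ₁)) d : ℝ) = 0 := by
    rw [hsub]; exact inner_zero_left d
  rw [inner_add_left, inner_add_left, real_inner_smul_left, real_inner_smul_left,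
    inner_sub_left, hA, real_inner_self_eq_norm_sq] at h0
  have hdd : (inner ℝ d d : ℝ) = ‖d‖^2 := real_inner_self_eq_norm_sq d
  have hwd : (inner ℝ w d : ℝ) ≤ ‖w‖ * ‖d‖ := real_inner_le_norm w d
  have hSd : (0:ℝ) ≤ ‖S d‖^2 := sq_nonneg _
  have key : ‖d‖ * ‖d‖ ≤ ‖w‖ * ‖d‖ := by
    nlinarith [mul_le_mul_of_nonneg_left hwd hα.le, mul_nonneg hγ.le hP, hSd]
  rcases (norm_nonneg d).eq_or_lt with h | h
  · rw [← h]; exact norm_nonneg w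
  · exact le_of_mul_le_mul_right key h
end

section
/- Consider the linear MPCC on a measure space $(\Omega, \mathcal{A}, m)$ with $m(\Omega) < \infty$: for $Av := v + \langle 1, v\rangle_{L^2}$, data $F_u, F_w, F_\xi \in L^2(\Omega)$, a measurable partition $\Omega^{0+}, \Omega^{00}, \Omega^{+0}$ of $\Omega$, measurable $\Omega_w \subset \Omega$, and measurable $\beta \subset \Omega^{00}$. Suppose $m(\Omega^{+0}) > 0$ and $(p, \mu, \nu, \lambda) \in L^2(\Omega)^4$ satisfies the KKT system: $F_u + A^* p + \mu = 0$, $F_w - p + \lambda = 0$, $F_\xi - p + \nu = 0$, $\mu \le 0$ a.e.\ on $\Omega^{00}\setminus\beta$, $\mu = 0$ a.e.\ on $\Omega^{+0}$, $\nu \le 0$ a.e.\ on $\beta$, $\nu = 0$ a.e.\ on $\Omega^{0+}$, $\lambda \le 0$ a.e.\ on $\Omega_w$, $\lambda = 0$ a.e.\ on $\Omega \setminus \Omega_w$. Then $\langle 1, |p|\rangle_{L^2} \le (2 + m(\Omega^{+0})^{-1})\, c_0$ pointwise a.e., where $c_0 := A^*(|F_u|+|F_w|+|F_\xi|) + |F_u|+|F_w|+|F_\xi|$.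 -/
open MeasureTheory RealInnerProductSpace

/-- Bound on `⟨1, |p|⟩` for KKT multipliers of the tightened linear problem LP(β),
in the case `A v = v + ⟨1, v⟩` and `m(Ω⁺⁰) > 0`. The conclusion states that the
constant `∫ |p| dm` is bounded a.e. by the function `(2 + m(Ω⁺⁰)⁻¹) c₀`. -/
theorem kkt_multiplier_L1_bound {Ω : Type*} [MeasurableSpace Ω] (m : Measure Ω)
    [IsFiniteMeasure m]
    (Fu Fw Fxi : Lp ℝ 2 m)
    (Ω0p Ω00 Ωp0 Ωw β : Set Ω)
    (h0p : MeasurableSet Ω0p) (h00 : MeasurableSet Ω00) (hp0 : MeasurableSet Ωp0)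
    (hw : MeasurableSet Ωw) (hβ : MeasurableSet β) (hβ00 : β ⊆ Ω00)
    (hdisj1 : Disjoint Ω0p Ω00) (hdisj2 : Disjoint Ω0p Ωp0) (hdisj3 : Disjoint Ω00 Ωp0)
    (hcover : Ω0p ∪ Ω00 ∪ Ωp0 = Set.univ)
    (hpos : 0 < m Ωp0)
    (one : Lp ℝ 2 m) (hone : ∀ᵐ ω ∂m, one ω = 1)
    (A : Lp ℝ 2 m →L[ℝ] Lp ℝ 2 m)
    (hA : ∀ v, A v = v + ⟪one, v⟫ • one)
    (c0 : Lp ℝ 2 m)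
    (hc0 : c0 = A (|Fu| + |Fw| + |Fxi|) + (|Fu| + |Fw| + |Fxi|))
    (p μ ν lam : Lp ℝ 2 m)
    (heq1 : Fu + ContinuousLinearMap.adjoint A p + μ = 0)
    (heq2 : Fw - p + lam = 0)
    (heq3 : Fxi - p + ν = 0)
    (hμ1 : ∀ᵐ ω ∂m, ω ∈ Ω00 \ β → μ ω ≤ 0)
    (hμ2 : ∀ᵐ ω ∂m, ω ∈ Ωp0 → μ ω = 0)
    (hν1 : ∀ᵐ ω ∂m, ω ∈ β → ν ω ≤ 0)
    (hν2 : ∀ᵐ ω ∂m, ω ∈ Ω0p → ν ω = 0)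
    (hlam1 : ∀ᵐ ω ∂m, ω ∈ Ωw → lam ω ≤ 0)
    (hlam2 : ∀ᵐ ω ∂m, ω ∉ Ωw → lam ω = 0) :
    ∀ᵐ ω ∂m, (∫ x, |p x| ∂m) ≤ (2 + ((m Ωp0).toReal)⁻¹) * c0 ω := by
  classical
  have hMpos : 0 < (m Ωp0).toReal :=
    ENNReal.toReal_pos hpos.ne' (measure_ne_top m _)
  set M := (m Ωp0).toReal with hMdef
  -- integrability of all the L² functions (finite measure)
  have hip : Integrable (fun ω => p ω) m := (Lp.memLp p).integrable (by norm_num)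
  have hiu : Integrable (fun ω => Fu ω) m := (Lp.memLp Fu).integrable (by norm_num)
  have hiw : Integrable (fun ω => Fw ω) m := (Lp.memLp Fw).integrable (by norm_num)
  have hix : Integrable (fun ω => Fxi ω) m := (Lp.memLp Fxi).integrable (by norm_num)
  -- A is self-adjoint
  have hAsa : ContinuousLinearMap.adjoint A = A := by
    rw [← ContinuousLinearMap.isSelfAdjoint_iff',
      ContinuousLinearMap.isSelfAdjoint_iff_isSymmetric]
    intro x y
    simp only [ContinuousLinearMap.coe_coe, hA, inner_add_left, inner_add_right,
      real_inner_smul_left, real_inner_smul_right]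
    rw [real_inner_comm x one]
    ring
  set c : ℝ := ⟪one, p⟫ with hcdef
  have hcint : c = ∫ ω, p ω ∂m := by
    rw [hcdef, L2.inner_def]
    refine integral_congr_ae ?_
    filter_upwards [hone] with ω h1
    simp [RCLike.inner_apply, h1]
  -- pointwise form of (A* p)
  have hApcoe : ∀ᵐ ω ∂m, (ContinuousLinearMap.adjoint A p) ω = p ω + c * one ω := by
    rw [hAsa, hA p]
    filter_upwards [Lp.coeFn_add p (c • one), Lp.coeFn_smul c one] with ω h1 h2
    rw [h1, Pi.add_apply, h2, Pi.smul_apply, smul_eq_mul]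
  -- pointwise form of μ
  have hμcoe : (⇑μ : Ω → ℝ) =ᵐ[m] fun ω => -(Fu ω + (p ω + c * one ω)) := by
    have h2 : μ = -(Fu + ContinuousLinearMap.adjoint A p) :=
      eq_neg_of_add_eq_zero_right heq1
    rw [h2]
    filter_upwards [Lp.coeFn_neg (Fu + ContinuousLinearMap.adjoint A p),
      Lp.coeFn_add Fu (ContinuousLinearMap.adjoint A p), hApcoe] with ω h3 h4 h5
    rw [h3, Pi.neg_apply, h4, Pi.add_apply, h5]
  -- pointwise form of λ and p ≤ Fw a.e.
  have hlamcoe : (⇑lam : Ω → ℝ) =ᵐ[m] fun ω => p ω - Fw ω := by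
    have h2 : lam = -(Fw - p) := eq_neg_of_add_eq_zero_right heq2
    rw [h2]
    filter_upwards [Lp.coeFn_neg (Fw - p), Lp.coeFn_sub Fw p] with ω h3 h4
    rw [h3, Pi.neg_apply, h4, Pi.sub_apply]
    ring
  have hpFw : ∀ᵐ ω ∂m, p ω ≤ Fw ω := by
    filter_upwards [hlamcoe, hlam1, hlam2] with ω h1 h2 h3
    have hl : lam ω ≤ 0 := by
      by_cases hω : ω ∈ Ωw
      · exact h2 hω
      · exact le_of_eq (h3 hω)
    rw [h1] at hl
    linarith
  -- key estimate on Ωp0 : -c ≤ |Fu| + |Fw|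
  have hkey : ∀ᵐ ω ∂m, ω ∈ Ωp0 → -c ≤ |Fu ω| + |Fw ω| := by
    filter_upwards [hμcoe, hμ2, hpFw, hone] with ω h1 h2 h3 h4
    intro hmem
    have h5 := h2 hmem
    rw [h1, h4, mul_one] at h5
    have h6 : -c = Fu ω + p ω := by linarith
    have := le_abs_self (Fu ω)
    have := le_abs_self (Fw ω)
    linarith
  -- integrate the key estimate over Ωp0
  have hI1int : Integrable (fun ω => |Fu ω| + |Fw ω|) m := hiu.abs.add hiw.abs
  set I1 : ℝ := ∫ ω, (|Fu ω| + |Fw ω|) ∂m with hI1def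
  have hcb : -c * M ≤ I1 := by
    have hres : ∀ᵐ ω ∂(m.restrict Ωp0), -c ≤ |Fu ω| + |Fw ω| :=
      (ae_restrict_iff' hp0).2 hkey
    have h1 : ∫ _ω in Ωp0, (-c) ∂m ≤ ∫ ω in Ωp0, (|Fu ω| + |Fw ω|) ∂m :=
      integral_mono_ae (integrable_const _) hI1int.restrict hres
    rw [setIntegral_const] at h1
    have h2 : ∫ ω in Ωp0, (|Fu ω| + |Fw ω|) ∂m ≤ I1 :=
      setIntegral_le_integral hI1int (ae_of_all _ fun ω => by positivity)
    calc -c * M = (m Ωp0).toReal • (-c) := by rw [smul_eq_mul]; ring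
    _ ≤ I1 := le_trans h1 h2
  -- ∫|p| ≤ 2 ∫|Fw| - c
  have habs : ∀ᵐ ω ∂m, |p ω| = 2 * max (p ω) 0 - p ω := by
    refine ae_of_all _ fun ω => ?_
    rcases le_total 0 (p ω) with hω | hω
    · rw [abs_of_nonneg hω, max_eq_left hω]; ring
    · rw [abs_of_nonpos hω, max_eq_right hω]; ring
  have hIp : ∫ ω, |p ω| ∂m = 2 * (∫ ω, max (p ω) 0 ∂m) - c := by
    rw [hcint, integral_congr_ae habs,
      integral_sub (hip.pos_part.const_mul 2) hip, integral_const_mul]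
  have hmax : ∫ ω, max (p ω) 0 ∂m ≤ ∫ ω, |Fw ω| ∂m := by
    refine integral_mono_ae hip.pos_part hiw.abs ?_
    filter_upwards [hpFw] with ω h
    exact le_trans (max_le_max h le_rfl) (max_le (le_abs_self _) (abs_nonneg _))
  -- the pointwise value of c0
  have hGcoe : (⇑(|Fu| + |Fw| + |Fxi| : Lp ℝ 2 m) : Ω → ℝ)
      =ᵐ[m] fun ω => |Fu ω| + |Fw ω| + |Fxi ω| := by
    filter_upwards [Lp.coeFn_add (|Fu| + |Fw| : Lp ℝ 2 m) |Fxi|,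
      Lp.coeFn_add (|Fu| : Lp ℝ 2 m) |Fw|, Lp.coeFn_abs Fu, Lp.coeFn_abs Fw,
      Lp.coeFn_abs Fxi] with ω h1 h2 h3 h4 h5
    simp only [Pi.add_apply] at h1 h2
    rw [h1, h2, h3, h4, h5]
  set Ig : ℝ := ∫ ω, (|Fu ω| + |Fw ω| + |Fxi ω|) ∂m with hIgdef
  have hIgint : Integrable (fun ω => |Fu ω| + |Fw ω| + |Fxi ω|) m :=
    hI1int.add hix.abs
  set G : Lp ℝ 2 m := |Fu| + |Fw| + |Fxi| with hGdef
  have hGinner : ⟪one, G⟫ = Ig := by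
    rw [L2.inner_def, hIgdef]
    refine integral_congr_ae ?_
    filter_upwards [hone, hGcoe] with ω h1 h2
    simp [RCLike.inner_apply, h1, h2]
  have hc0coe : (⇑c0 : Ω → ℝ)
      =ᵐ[m] fun ω => 2 * (|Fu ω| + |Fw ω| + |Fxi ω|) + Ig := by
    rw [hc0, hA G, hGinner]
    filter_upwards [Lp.coeFn_add (G + Ig • one) G, Lp.coeFn_add G (Ig • one),
      Lp.coeFn_smul Ig one, hGcoe, hone] with ω h1 h2 h3 h4 h5
    simp only [Pi.add_apply, Pi.smul_apply, smul_eq_mul] at h1 h2 h3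
    rw [h1, h2, h3, h4, h5, mul_one]
    ring
  -- comparisons of integrals
  have hIg0 : 0 ≤ Ig := by
    rw [hIgdef]; exact integral_nonneg fun ω => by positivity
  have hFwIg : ∫ ω, |Fw ω| ∂m ≤ Ig := by
    refine integral_mono_ae hiw.abs hIgint (ae_of_all _ fun ω => ?_)
    dsimp only
    have := abs_nonneg (Fu ω); have := abs_nonneg (Fxi ω); linarith
  have hI1Ig : I1 ≤ Ig := by
    refine integral_mono_ae hI1int hIgint (ae_of_all _ fun ω => ?_)
    dsimp only
    have := abs_nonneg (Fxi ω); linarith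
  -- conclusion
  filter_upwards [hc0coe] with ω hω
  rw [hω]
  have hg0 : 0 ≤ |Fu ω| + |Fw ω| + |Fxi ω| := by positivity
  have hMinv : 0 < M⁻¹ := inv_pos.2 hMpos
  have h7 : -c ≤ I1 / M := (le_div_iff₀ hMpos).2 (by linarith)
  have hstep1 : ∫ x, |p x| ∂m ≤ 2 * (∫ ω, |Fw ω| ∂m) + I1 / M := by
    rw [hIp]; linarith
  have h8 : I1 / M ≤ Ig / M := (div_le_div_iff_of_pos_right hMpos).2 hI1Ig
  have hstep2 : 2 * (∫ ω, |Fw ω| ∂m) + I1 / M ≤ (2 + M⁻¹) * Ig := by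
    have h9 : (2 + M⁻¹) * Ig = 2 * Ig + Ig / M := by
      rw [div_eq_mul_inv]; ring
    linarith
  have hstep3 : (2 + M⁻¹) * Ig ≤ (2 + M⁻¹) * (2 * (|Fu ω| + |Fw ω| + |Fxi ω|) + Ig) := by
    have h10 : (0:ℝ) ≤ 2 + M⁻¹ := by positivity
    have h11 : Ig ≤ 2 * (|Fu ω| + |Fw ω| + |Fxi ω|) + Ig := by linarith
    exact mul_le_mul_of_nonneg_left h11 h10
  linarith
end
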